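/- Let 𝓑 be the real vector space of Hermitian 16×16 complex matrices, regarded as matrices on the four-fold Kronecker product ℂ²⊗ℂ²⊗ℂ²⊗ℂ² (so dim_ℝ 𝓑 = 256). Let V1 be the real span of all matrices (I₄/4) ⊗ A ⊗ B, where I₄ is the 4×4 identity occupying the first two tensor factors and A, B are Hermitian 2×2 matrices with Tr B = 0; let V2 be the real span of all matrices A ⊗ B ⊗ (I₄/4), where A, B are Hermitian 2×2 matrices with Tr B = 0 and I₄ occupies the last two tensor factors; and let V3 be the real span of all matrices A1 ⊗ B1 ⊗ A2 ⊗ B2, where A1, B1, A2, B2 are Hermitian 2×2 matrices with Tr B1 = 0 and Tr B2 = 0. Then dim_ℝ(V1 + V2 + V3) = 168, and hence the quotient space 𝓑/(V1 + V2 + V3) has real dimension 88. -/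

import Mathlib

open Matrix Kronecker

/-- The index type of the four-fold Kronecker product ℂ²⊗ℂ²⊗ℂ²⊗ℂ², grouped as
((I,1)×(O,1)) × ((I,2)×(O,2)). -/
abbrev ProcIdx : Type := (Fin 2 × Fin 2) × (Fin 2 × Fin 2)

/-- 𝓑: the real vector space of Hermitian 16×16 complex matrices, as a real submodule of
the space of all 16×16 complex matrices. -/
noncomputable def HermB : Submodule ℝ (Matrix ProcIdx ProcIdx ℂ) :=
  selfAdjoint.submodule ℝ (Matrix ProcIdx ProcIdx ℂ)

/-- Generators of V1: matrices (I₄/4) ⊗ A ⊗ B with A, B Hermitian and Tr B = 0. -/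
def genS1 : Set (Matrix ProcIdx ProcIdx ℂ) :=
  {M | ∃ A B : Matrix (Fin 2) (Fin 2) ℂ, A.IsHermitian ∧ B.IsHermitian ∧ B.trace = 0 ∧
    M = (((1 : ℂ) / 4) • (1 : Matrix (Fin 2 × Fin 2) (Fin 2 × Fin 2) ℂ)) ⊗ₖ (A ⊗ₖ B)}

/-- Generators of V2: matrices A ⊗ B ⊗ (I₄/4) with A, B Hermitian and Tr B = 0. -/
def genS2 : Set (Matrix ProcIdx ProcIdx ℂ) :=
  {M | ∃ A B : Matrix (Fin 2) (Fin 2) ℂ, A.IsHermitian ∧ B.IsHermitian ∧ B.trace = 0 ∧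
    M = (A ⊗ₖ B) ⊗ₖ (((1 : ℂ) / 4) • (1 : Matrix (Fin 2 × Fin 2) (Fin 2 × Fin 2) ℂ))}

/-- Generators of V3: matrices A1 ⊗ B1 ⊗ A2 ⊗ B2 with all factors Hermitian and
Tr B1 = Tr B2 = 0. -/
def genS3 : Set (Matrix ProcIdx ProcIdx ℂ) :=
  {M | ∃ A1 B1 A2 B2 : Matrix (Fin 2) (Fin 2) ℂ,
    A1.IsHermitian ∧ B1.IsHermitian ∧ A2.IsHermitian ∧ B2.IsHermitian ∧
    B1.trace = 0 ∧ B2.trace = 0 ∧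
    M = (A1 ⊗ₖ B1) ⊗ₖ (A2 ⊗ₖ B2)}

/-- V1 + V2 + V3, as the real span of the union of the three generating sets. -/
noncomputable def Vsum : Submodule ℝ (Matrix ProcIdx ProcIdx ℂ) :=
  Submodule.span ℝ (genS1 ∪ genS2 ∪ genS3)


noncomputable def σ : Fin 4 → Matrix (Fin 2) (Fin 2) ℂ
  | 0 => 1
  | 1 => !![0, 1; 1, 0]
  | 2 => !![0, -Complex.I; Complex.I, 0]
  | 3 => !![1, 0; 0, -1]

lemma σ_herm : ∀ i, (σ i).IsHermitian := by
  intro i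
  fin_cases i <;>
  · ext a b
    fin_cases a <;> fin_cases b <;>
      simp [σ, Matrix.conjTranspose_apply, Matrix.one_apply]

lemma σ_traceless : ∀ i : Fin 4, i ≠ 0 → (σ i).trace = 0 := by
  intro i hi
  fin_cases i <;> simp [σ, Matrix.trace_fin_two] at hi ⊢

lemma trace_σ_mul (i j : Fin 4) : (σ i * σ j).trace = if i = j then 2 else 0 := by
  fin_cases i <;> fin_cases j <;>
    simp [σ, Matrix.trace_fin_two, Matrix.mul_apply, Fin.sum_univ_two, Matrix.one_apply,
      Complex.ext_iff] <;> ring_nf <;> simp [Complex.I_sq]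

/-- Decomposition of a Hermitian 2×2 matrix in the Pauli basis, with real coefficients. -/
lemma herm_decomp {A : Matrix (Fin 2) (Fin 2) ℂ} (hA : A.IsHermitian) :
    ∃ c : Fin 4 → ℝ, A = ∑ i, c i • σ i ∧ (A.trace = 0 → c 0 = 0) := by
  have h00 : (A 0 0).im = 0 := by
    have := congrFun (congrFun hA 0) 0
    have h := congrArg Complex.im (congrFun (congrFun hA 0) 0)
    simp [Matrix.conjTranspose_apply] at h
    linarith
  have h11 : (A 1 1).im = 0 := by
    have h := congrArg Complex.im (congrFun (congrFun hA 1) 1)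
    simp [Matrix.conjTranspose_apply] at h
    linarith
  have h10 : A 1 0 = starRingEnd ℂ (A 0 1) := by
    have h := congrFun (congrFun hA 1) 0
    rw [Matrix.conjTranspose_apply] at h
    exact h.symm
  refine ⟨![((A 0 0).re + (A 1 1).re)/2, (A 0 1).re, -(A 0 1).im,
    ((A 0 0).re - (A 1 1).re)/2], ?_, ?_⟩
  · ext a b
    fin_cases a <;> fin_cases b <;>
      simp [σ, Fin.sum_univ_four, Matrix.one_apply, h10, Complex.ext_iff, h00, h11,
        Complex.real_smul] <;>
      try ring
  · intro ht
    have := ht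
    rw [Matrix.trace_fin_two] at this
    have : (A 0 0).re + (A 1 1).re = 0 := by
      have := congrArg Complex.re this
      simpa using this
    simp [this]
abbrev PIdx : Type := (Fin 4 × Fin 4) × (Fin 4 × Fin 4)

noncomputable def P : PIdx → Matrix ProcIdx ProcIdx ℂ :=
  fun t => (σ t.1.1 ⊗ₖ σ t.1.2) ⊗ₖ (σ t.2.1 ⊗ₖ σ t.2.2)

lemma conjT_kron {l m n p : Type*} (A : Matrix l m ℂ) (B : Matrix n p ℂ) :
    (A ⊗ₖ B)ᴴ = Aᴴ ⊗ₖ Bᴴ := by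
  ext i j
  simp [Matrix.conjTranspose_apply]

lemma kron_herm {m n : Type*} {A : Matrix m m ℂ} {B : Matrix n n ℂ}
    (hA : A.IsHermitian) (hB : B.IsHermitian) : (A ⊗ₖ B).IsHermitian := by
  unfold Matrix.IsHermitian at *
  rw [conjT_kron, hA, hB]

lemma P_herm (t : PIdx) : (P t).IsHermitian :=
  kron_herm (kron_herm (σ_herm _) (σ_herm _)) (kron_herm (σ_herm _) (σ_herm _))

lemma trace_P_mul (s t : PIdx) : (P s * P t).trace = if s = t then 16 else 0 := by
  obtain ⟨⟨a, b⟩, ⟨c, d⟩⟩ := s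
  obtain ⟨⟨a', b'⟩, ⟨c', d'⟩⟩ := t
  rw [P, P]
  rw [show ((σ a ⊗ₖ σ b) ⊗ₖ (σ c ⊗ₖ σ d)) * ((σ a' ⊗ₖ σ b') ⊗ₖ (σ c' ⊗ₖ σ d'))
      = ((σ a * σ a') ⊗ₖ (σ b * σ b')) ⊗ₖ ((σ c * σ c') ⊗ₖ (σ d * σ d')) by
    rw [Matrix.mul_kronecker_mul, Matrix.mul_kronecker_mul, Matrix.mul_kronecker_mul]]
  rw [Matrix.trace_kronecker, Matrix.trace_kronecker, Matrix.trace_kronecker,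
    trace_σ_mul, trace_σ_mul, trace_σ_mul, trace_σ_mul]
  by_cases h1 : a = a' <;> by_cases h2 : b = b' <;> by_cases h3 : c = c' <;>
    by_cases h4 : d = d' <;>
    simp [h1, h2, h3, h4, Prod.ext_iff] <;> norm_num

lemma P_indep : LinearIndependent ℂ P := by
  rw [Fintype.linearIndependent_iff]
  intro g hg s
  have h := congrArg (fun M => (P s * M).trace) hg
  simp only [Matrix.mul_sum, Matrix.mul_smul, Matrix.trace_sum, Matrix.trace_smul,
    trace_P_mul, Matrix.mul_zero, Matrix.trace_zero, smul_eq_mul] at h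
  rw [Finset.sum_eq_single s] at h
  · simp only [if_pos rfl] at h
    have := mul_eq_zero.mp h
    rcases this with h' | h'
    · exact h'
    · norm_num at h'
  · intro b _ hb
    simp [Ne.symm hb]
  · simp

lemma P_indep_real : LinearIndependent ℝ P :=
  P_indep.restrict_scalars (smul_left_injective ℝ one_ne_zero)

lemma expand_kron {ι κ m n p q : Type*} [Fintype ι] [Fintype κ]
    (r : ι → ℝ) (s : κ → ℝ) (F : ι → Matrix m n ℂ) (G : κ → Matrix p q ℂ) :
    (∑ i, r i • F i) ⊗ₖ (∑ j, s j • G j)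
      = ∑ t : ι × κ, (r t.1 * s t.2) • (F t.1 ⊗ₖ G t.2) := by
  ext ⟨a, b⟩ ⟨e, f⟩
  simp only [Matrix.kroneckerMap_apply, Matrix.sum_apply, Matrix.smul_apply,
    Fintype.sum_prod_type]
  rw [Finset.sum_mul_sum]
  refine Finset.sum_congr rfl fun i _ => Finset.sum_congr rfl fun j _ => ?_
  simp [Complex.real_smul]
  ring

lemma quarter_one : (((1 : ℂ) / 4) • (1 : Matrix (Fin 2 × Fin 2) (Fin 2 × Fin 2) ℂ))
    = ∑ _u : Fin 1, (1/4 : ℝ) • (σ 0 ⊗ₖ σ 0) := by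
  have h1 : σ 0 ⊗ₖ σ 0 = (1 : Matrix (Fin 2 × Fin 2) (Fin 2 × Fin 2) ℂ) := by
    show (1 : Matrix (Fin 2) (Fin 2) ℂ) ⊗ₖ 1 = 1
    exact Matrix.one_kronecker_one
  rw [Fin.sum_univ_one, h1]
  ext i j
  simp [Complex.real_smul]

def good : PIdx → Prop := fun t =>
  (t.1 = (0, 0) ∧ t.2.2 ≠ 0) ∨ (t.2 = (0, 0) ∧ t.1.2 ≠ 0) ∨ (t.1.2 ≠ 0 ∧ t.2.2 ≠ 0)

instance : DecidablePred good := fun t => by unfold good; infer_instance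

noncomputable def Sgood : Finset PIdx := Finset.univ.filter good

set_option maxRecDepth 4000 in
lemma card_Sgood : Sgood.card = 168 := by decide

lemma mem_Sgood {t : PIdx} (h : good t) : t ∈ Sgood := by
  simp only [Sgood, Finset.mem_filter, Finset.mem_univ, true_and]
  exact h



lemma sigma00_one : σ 0 ⊗ₖ σ 0 = (1 : Matrix (Fin 2 × Fin 2) (Fin 2 × Fin 2) ℂ) := by
  show (1 : Matrix (Fin 2) (Fin 2) ℂ) ⊗ₖ 1 = 1
  exact Matrix.one_kronecker_one

lemma four_smul_gen_left (X : Matrix (Fin 2 × Fin 2) (Fin 2 × Fin 2) ℂ) :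
    (4 : ℝ) • ((((1 : ℂ) / 4) • (1 : Matrix (Fin 2 × Fin 2) (Fin 2 × Fin 2) ℂ)) ⊗ₖ X)
      = (σ 0 ⊗ₖ σ 0) ⊗ₖ X := by
  rw [sigma00_one]
  ext ⟨a, b⟩ ⟨c, d⟩
  simp [Matrix.kroneckerMap_apply, Matrix.smul_apply, Complex.real_smul, Matrix.one_apply]
  try ring

lemma four_smul_gen_right (X : Matrix (Fin 2 × Fin 2) (Fin 2 × Fin 2) ℂ) :
    (4 : ℝ) • (X ⊗ₖ (((1 : ℂ) / 4) • (1 : Matrix (Fin 2 × Fin 2) (Fin 2 × Fin 2) ℂ)))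
      = X ⊗ₖ (σ 0 ⊗ₖ σ 0) := by
  rw [sigma00_one]
  ext ⟨a, b⟩ ⟨c, d⟩
  simp [Matrix.kroneckerMap_apply, Matrix.smul_apply, Complex.real_smul, Matrix.one_apply]
  try ring

/-- The span of the good Pauli words. -/
noncomputable def W : Submodule ℝ (Matrix ProcIdx ProcIdx ℂ) :=
  Submodule.span ℝ (P '' ↑Sgood)

lemma genS1_sub_W : genS1 ⊆ (W : Set (Matrix ProcIdx ProcIdx ℂ)) := by
  rintro M ⟨A, B, hA, hB, hBt, rfl⟩
  obtain ⟨c, hc, -⟩ := herm_decomp hA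
  obtain ⟨d, hd, hd0⟩ := herm_decomp hB
  have hd0' : d 0 = 0 := hd0 hBt
  rw [hc, hd, expand_kron c d σ σ, quarter_one, expand_kron]
  apply Submodule.sum_mem
  rintro ⟨u, i, j⟩ -
  by_cases hj : j = 0
  · subst hj
    rw [hd0']
    simp
  · apply Submodule.smul_mem
    apply Submodule.subset_span
    exact ⟨((0,0),(i,j)), mem_Sgood (Or.inl ⟨rfl, hj⟩), rfl⟩

lemma genS2_sub_W : genS2 ⊆ (W : Set (Matrix ProcIdx ProcIdx ℂ)) := by
  rintro M ⟨A, B, hA, hB, hBt, rfl⟩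
  obtain ⟨c, hc, -⟩ := herm_decomp hA
  obtain ⟨d, hd, hd0⟩ := herm_decomp hB
  have hd0' : d 0 = 0 := hd0 hBt
  rw [hc, hd, expand_kron c d σ σ, quarter_one, expand_kron]
  apply Submodule.sum_mem
  rintro ⟨⟨i, j⟩, u⟩ -
  by_cases hj : j = 0
  · subst hj
    rw [hd0']
    simp
  · apply Submodule.smul_mem
    apply Submodule.subset_span
    exact ⟨((i,j),(0,0)), mem_Sgood (Or.inr (Or.inl ⟨rfl, hj⟩)), rfl⟩

lemma genS3_sub_W : genS3 ⊆ (W : Set (Matrix ProcIdx ProcIdx ℂ)) := by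
  rintro M ⟨A1, B1, A2, B2, hA1, hB1, hA2, hB2, hB1t, hB2t, rfl⟩
  obtain ⟨c1, hc1, -⟩ := herm_decomp hA1
  obtain ⟨d1, hd1, hd10⟩ := herm_decomp hB1
  obtain ⟨c2, hc2, -⟩ := herm_decomp hA2
  obtain ⟨d2, hd2, hd20⟩ := herm_decomp hB2
  have h10 : d1 0 = 0 := hd10 hB1t
  have h20 : d2 0 = 0 := hd20 hB2t
  rw [hc1, hd1, hc2, hd2, expand_kron c1 d1 σ σ, expand_kron c2 d2 σ σ, expand_kron]
  apply Submodule.sum_mem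
  rintro ⟨⟨i, j⟩, ⟨k, l⟩⟩ -
  by_cases hj : j = 0
  · subst hj; rw [h10]; simp
  by_cases hl : l = 0
  · subst hl; rw [h20]; simp
  apply Submodule.smul_mem
  apply Submodule.subset_span
  exact ⟨((i,j),(k,l)), mem_Sgood (Or.inr (Or.inr ⟨hj, hl⟩)), rfl⟩

lemma Vsum_eq_W : Vsum = W := by
  apply le_antisymm
  · rw [Vsum]
    apply Submodule.span_le.mpr
    intro x hx
    rcases hx with (h | h) | h
    · exact genS1_sub_W h
    · exact genS2_sub_W h
    · exact genS3_sub_W h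
  · rw [W]
    apply Submodule.span_le.mpr
    rintro x ⟨t, ht, rfl⟩
    have hgood : good t := by
      simpa [Sgood, Finset.mem_filter] using ht
    obtain ⟨⟨a, b⟩, ⟨e, f⟩⟩ := t
    rcases hgood with ⟨h1, h2⟩ | ⟨h1, h2⟩ | ⟨h1, h2⟩
    · -- t.1 = (0,0), a = 0, b = 0
      simp only [Prod.mk.injEq] at h1
      obtain ⟨rfl, rfl⟩ := h1
      have : P ((0,0),(e,f)) = (4 : ℝ) •
          ((((1 : ℂ) / 4) • (1 : Matrix (Fin 2 × Fin 2) (Fin 2 × Fin 2) ℂ)) ⊗ₖ (σ e ⊗ₖ σ f)) := by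
        rw [four_smul_gen_left]; rfl
      rw [this]
      apply Submodule.smul_mem
      apply Submodule.subset_span
      left; left
      exact ⟨σ e, σ f, σ_herm e, σ_herm f, σ_traceless f h2, rfl⟩
    · simp only [Prod.mk.injEq] at h1
      obtain ⟨rfl, rfl⟩ := h1
      have : P ((a,b),(0,0)) = (4 : ℝ) •
          ((σ a ⊗ₖ σ b) ⊗ₖ (((1 : ℂ) / 4) • (1 : Matrix (Fin 2 × Fin 2) (Fin 2 × Fin 2) ℂ))) := by
        rw [four_smul_gen_right]; rfl
      rw [this]
      apply Submodule.smul_mem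
      apply Submodule.subset_span
      left; right
      exact ⟨σ a, σ b, σ_herm a, σ_herm b, σ_traceless b h2, rfl⟩
    · apply Submodule.subset_span
      right
      exact ⟨σ a, σ b, σ e, σ f, σ_herm a, σ_herm b, σ_herm e, σ_herm f,
        σ_traceless b h1, σ_traceless f h2, rfl⟩

lemma finrank_W : Module.finrank ℝ W = 168 := by
  have hind : LinearIndependent ℝ (fun t : {x // x ∈ Sgood} => P ↑t) :=
    P_indep_real.comp Subtype.val Subtype.val_injective
  have hr : Set.range (fun t : {x // x ∈ Sgood} => P ↑t) = P '' ↑Sgood :=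
    (Set.image_eq_range P ↑Sgood).symm
  have := finrank_span_eq_card hind
  rw [hr] at this
  rw [W, this, Fintype.card_coe, card_Sgood]


lemma P_mem_HermB (t : PIdx) : P t ∈ HermB := by
  have := (P_herm t).isSelfAdjoint
  exact this

/-- The Pauli words as elements of the Hermitian submodule. -/
noncomputable def Q : PIdx → HermB := fun t => ⟨P t, P_mem_HermB t⟩

lemma Q_indep : LinearIndependent ℝ Q := by
  apply LinearIndependent.of_comp HermB.subtype
  exact P_indep_real

lemma card_PIdx : Fintype.card PIdx = 256 := by simp

/-- The complex Pauli basis of the full matrix algebra. -/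
noncomputable def bC : Module.Basis PIdx ℂ (Matrix ProcIdx ProcIdx ℂ) :=
  basisOfLinearIndependentOfCardEqFinrank P_indep
    (by rw [card_PIdx, Module.finrank_matrix]; simp)

lemma bC_apply (t : PIdx) : bC t = P t := by
  rw [bC, coe_basisOfLinearIndependentOfCardEqFinrank]

lemma real_coe_smul (r : ℝ) (A : Matrix ProcIdx ProcIdx ℂ) : (r : ℂ) • A = r • A := by
  ext i j
  simp [Complex.real_smul]

/-- Every Hermitian matrix is a real combination of Pauli words. -/
lemma herm_repr (M : Matrix ProcIdx ProcIdx ℂ) (hM : M ∈ HermB) :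
    ∃ r : PIdx → ℝ, M = ∑ t, r t • P t := by
  have hMh : Mᴴ = M := by
    have : IsSelfAdjoint M := by exact hM
    exact this
  set cc : PIdx → ℂ := fun t => bC.repr M t with hcc
  have hsum : M = ∑ t, cc t • P t := by
    conv_lhs => rw [← bC.sum_repr M]
    refine Finset.sum_congr rfl fun t _ => by rw [bC_apply]
  have hMH : Mᴴ = ∑ t, (starRingEnd ℂ) (cc t) • P t := by
    conv_lhs => rw [hsum]
    rw [Matrix.conjTranspose_sum]
    refine Finset.sum_congr rfl fun t _ => ?_
    rw [Matrix.conjTranspose_smul, (P_herm t)]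
    rfl
  have heq : ∑ t, (starRingEnd ℂ) (cc t) • P t = ∑ t, cc t • P t :=
    hMH.symm.trans (hMh.trans hsum)
  have h0 : ∑ t, ((starRingEnd ℂ) (cc t) - cc t) • P t = 0 := by
    simp only [sub_smul, Finset.sum_sub_distrib, heq, sub_self]
  have hconj : ∀ t, (starRingEnd ℂ) (cc t) = cc t := fun t =>
    sub_eq_zero.mp (Fintype.linearIndependent_iff.mp P_indep _ h0 t)
  refine ⟨fun t => (cc t).re, ?_⟩
  rw [hsum]
  refine Finset.sum_congr rfl fun t _ => ?_
  rw [← real_coe_smul]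
  congr 1
  have him : (cc t).im = 0 := Complex.conj_eq_iff_im.mp (hconj t)
  exact (Complex.conj_eq_iff_re.mp (hconj t)).symm

lemma HermB_le_spanP : HermB ≤ Submodule.span ℝ (Set.range P) := by
  intro M hM
  obtain ⟨r, hr⟩ := herm_repr M hM
  rw [hr]
  exact Submodule.sum_mem _ fun t _ =>
    Submodule.smul_mem _ _ (Submodule.subset_span ⟨t, rfl⟩)

noncomputable def bQ : Module.Basis PIdx ℝ HermB :=
  Module.Basis.mk Q_indep (by
    rintro ⟨M, hM⟩ -
    obtain ⟨r, hr⟩ := herm_repr M hM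
    have : (⟨M, hM⟩ : HermB) = ∑ t, r t • Q t := by
      apply Subtype.ext
      push_cast
      exact hr
    rw [this]
    exact Submodule.sum_mem _ fun t _ =>
      Submodule.smul_mem _ _ (Submodule.subset_span ⟨t, rfl⟩))

lemma finrank_HermB : Module.finrank ℝ HermB = 256 := by
  rw [Module.finrank_eq_card_basis bQ, card_PIdx]

set_option synthInstance.maxHeartbeats 1000000 in
set_option maxHeartbeats 1000000 in
/-- dim_ℝ(V1 + V2 + V3) = 168, and hence the quotient
𝓑/(V1 + V2 + V3) has real dimension 88. -/
theorem stmt15 :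
    Module.finrank ℝ Vsum = 168 ∧
    Module.finrank ℝ (HermB ⧸ (Vsum.comap HermB.subtype)) = 88 := by
  have h1 : Module.finrank ℝ Vsum = 168 := by rw [Vsum_eq_W]; exact finrank_W
  refine ⟨h1, ?_⟩
  have hle : Vsum ≤ HermB := by
    rw [Vsum_eq_W, W]
    apply Submodule.span_le.mpr
    rintro x ⟨t, -, rfl⟩
    exact P_mem_HermB t
  have hfd : FiniteDimensional ℝ HermB := Module.Finite.of_basis bQ
  have hcomap : Module.finrank ℝ (Vsum.comap HermB.subtype) = 168 := by
    rw [LinearEquiv.finrank_eq (Submodule.comapSubtypeEquivOfLe hle), h1]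
  have hq := Submodule.finrank_quotient_add_finrank (Vsum.comap HermB.subtype)
  rw [hcomap, finrank_HermB] at hq
  omega
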